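/- Let A, B, P, Q ∈ ℂ satisfy the conformality relation A·conj(B) = P·conj(Q) and the orientation condition |A| ≥ |B|, and suppose that for every α ∈ ℂ with |α| = 1 one has |conj(α)·P + α·Q| < |conj(α)·A + α·B|. Then |A| > |P| ≥ |B| and |A| > |Q| ≥ |B|; in particular A ≠ 0. -/

import Mathlib

open Complex


lemma sqrt_unit (u : ℂ) (hu : ‖u‖ = 1) :
    ∃ α : ℂ, ‖α‖ = 1 ∧ α ^ 2 = u := by
  refine ⟨Complex.exp ((u.arg / 2 : ℝ) * Complex.I), Complex.norm_exp_ofReal_mul_I _, ?_⟩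
  have h0 : Complex.exp ((u.arg / 2 : ℝ) * Complex.I) ^ 2
      = Complex.exp ((u.arg : ℝ) * Complex.I) := by
    rw [← Complex.exp_nat_mul]
    congr 1
    push_cast
    ring
  have h1 := Complex.norm_mul_exp_arg_mul_I u
  rw [hu] at h1
  rw [h0]
  simpa using h1

lemma key_form (α X Y : ℂ) (hα : ‖α‖ = 1) :
    ‖(starRingEnd ℂ) α * X + α * Y‖ = ‖X + α ^ 2 * Y‖ := by
  have h1 : (starRingEnd ℂ) α * α = 1 := by
    rw [← Complex.normSq_eq_conj_mul_self, ← Complex.sq_norm, hα]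
    norm_num
  have h2 : (starRingEnd ℂ) α * X + α * Y = (starRingEnd ℂ) α * (X + α ^ 2 * Y) := by
    have : (starRingEnd ℂ) α * (α ^ 2 * Y) = α * Y := by
      rw [sq]; rw [← mul_assoc, ← mul_assoc, h1, one_mul]
    rw [mul_add, this]
  rw [h2, norm_mul, Complex.norm_conj, hα, one_mul]

lemma max_pt (P Q : ℂ) : ∃ α : ℂ, ‖α‖ = 1 ∧
    ‖(starRingEnd ℂ) α * P + α * Q‖ = ‖P‖ + ‖Q‖ := by
  by_cases hP : P = 0
  · exact ⟨1, by simp, by simp [hP]⟩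
  by_cases hQ : Q = 0
  · exact ⟨1, by simp, by simp [hQ]⟩
  have hPa : ‖P‖ ≠ 0 := by simpa using hP
  have hQa : ‖Q‖ ≠ 0 := by simpa using hQ
  set u : ℂ := (P / Q) * ((‖Q‖ / ‖P‖ : ℝ) : ℂ) with hu
  have huabs : ‖u‖ = 1 := by
    rw [hu, norm_mul, norm_div, Complex.norm_real, Real.norm_eq_abs, abs_div, _root_.abs_of_nonneg (norm_nonneg Q),
      _root_.abs_of_nonneg (norm_nonneg P)]
    field_simp
  obtain ⟨α, hα1, hα2⟩ := sqrt_unit u huabs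
  refine ⟨α, hα1, ?_⟩
  rw [key_form α P Q hα1, hα2, hu]
  have : P / Q * ((‖Q‖ / ‖P‖ : ℝ) : ℂ) * Q
      = P * ((‖Q‖ / ‖P‖ : ℝ) : ℂ) := by
    rw [div_mul_eq_mul_div, div_mul_cancel₀ _ hQ]
  rw [this]
  have : P + P * ((‖Q‖ / ‖P‖ : ℝ) : ℂ)
      = P * ((1 + ‖Q‖ / ‖P‖ : ℝ) : ℂ) := by
    push_cast; ring
  rw [this, norm_mul, Complex.norm_real, Real.norm_eq_abs,
    _root_.abs_of_nonneg (by positivity : (0:ℝ) ≤ 1 + ‖Q‖ / ‖P‖)]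
  field_simp

lemma min_pt (A B : ℂ) (h : ‖B‖ ≤ ‖A‖) : ∃ α : ℂ, ‖α‖ = 1 ∧
    ‖(starRingEnd ℂ) α * A + α * B‖ = ‖A‖ - ‖B‖ := by
  by_cases hB : B = 0
  · exact ⟨1, by simp, by simp [hB]⟩
  have hBa : (0:ℝ) < ‖B‖ := by simpa [norm_pos_iff] using hB
  have hAa : (0:ℝ) < ‖A‖ := lt_of_lt_of_le hBa h
  have hA : A ≠ 0 := by simpa [norm_pos_iff] using hAa
  set u : ℂ := -((A / B) * ((‖B‖ / ‖A‖ : ℝ) : ℂ)) with hu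
  have huabs : ‖u‖ = 1 := by
    rw [hu, norm_neg, norm_mul, norm_div, Complex.norm_real, Real.norm_eq_abs, abs_div,
      _root_.abs_of_nonneg (norm_nonneg B), _root_.abs_of_nonneg (norm_nonneg A)]
    field_simp
  obtain ⟨α, hα1, hα2⟩ := sqrt_unit u huabs
  refine ⟨α, hα1, ?_⟩
  rw [key_form α A B hα1, hα2, hu]
  have h1 : -((A / B) * ((‖B‖ / ‖A‖ : ℝ) : ℂ)) * B
      = -(A * ((‖B‖ / ‖A‖ : ℝ) : ℂ)) := by
    rw [neg_mul, div_mul_eq_mul_div, div_mul_cancel₀ _ hB]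
  rw [h1]
  have h2 : A + -(A * ((‖B‖ / ‖A‖ : ℝ) : ℂ))
      = A * ((1 - ‖B‖ / ‖A‖ : ℝ) : ℂ) := by
    push_cast; ring
  have h3 : (0:ℝ) ≤ 1 - ‖B‖ / ‖A‖ := by
    rw [sub_nonneg, div_le_one hAa]; exact h
  rw [h2, norm_mul, Complex.norm_real, Real.norm_eq_abs, _root_.abs_of_nonneg h3]
  field_simp

/-- If `A conj(B) = P conj(Q)`, `|A| ≥ |B|`, and for every unimodular `α` one has
`|conj(α) P + α Q| < |conj(α) A + α B|`, then `|A| > |P| ≥ |B|` and `|A| > |Q| ≥ |B|`;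
in particular `A ≠ 0`. -/
theorem spacelike_gradient_inequalities (A B P Q : ℂ)
    (hconf : A * (starRingEnd ℂ) B = P * (starRingEnd ℂ) Q)
    (horient : ‖B‖ ≤ ‖A‖)
    (hspace : ∀ α : ℂ, ‖α‖ = 1 →
      ‖(starRingEnd ℂ) α * P + α * Q‖ <
        ‖(starRingEnd ℂ) α * A + α * B‖) :
    ‖P‖ < ‖A‖ ∧ ‖B‖ ≤ ‖P‖ ∧
      ‖Q‖ < ‖A‖ ∧ ‖B‖ ≤ ‖Q‖ ∧ A ≠ 0 := by
  set a := ‖A‖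
  set b := ‖B‖
  set p := ‖P‖
  set q := ‖Q‖
  have hab : a * b = p * q := by
    have := congrArg (‖·‖) hconf
    simpa [norm_mul, Complex.norm_conj] using this
  -- first inequality: p + q < a + b
  obtain ⟨α₁, hα₁, he₁⟩ := max_pt P Q
  have h1 : p + q < a + b := by
    have := hspace α₁ hα₁
    rw [he₁] at this
    refine lt_of_lt_of_le this ?_
    calc ‖(starRingEnd ℂ) α₁ * A + α₁ * B‖
        ≤ ‖(starRingEnd ℂ) α₁ * A‖ + ‖α₁ * B‖ := norm_add_le _ _
      _ = a + b := by rw [norm_mul, norm_mul, Complex.norm_conj, hα₁, one_mul, one_mul]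
  -- second: |p - q| < a - b
  obtain ⟨α₂, hα₂, he₂⟩ := min_pt A B horient
  have hlow := hspace α₂ hα₂
  rw [he₂] at hlow
  have h2 : p - q < a - b := by
    have : p ≤ ‖(starRingEnd ℂ) α₂ * P + α₂ * Q‖ + q := by
      calc p = ‖((starRingEnd ℂ) α₂ * P + α₂ * Q) - α₂ * Q‖ := by
              rw [add_sub_cancel_right, norm_mul, Complex.norm_conj, hα₂, one_mul]
        _ ≤ ‖(starRingEnd ℂ) α₂ * P + α₂ * Q‖ + ‖α₂ * Q‖ := by
              simpa [sub_eq_add_neg, norm_neg] using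
                norm_add_le ((starRingEnd ℂ) α₂ * P + α₂ * Q) (-(α₂ * Q))
        _ = ‖(starRingEnd ℂ) α₂ * P + α₂ * Q‖ + q := by
              rw [norm_mul, hα₂, one_mul]
    linarith
  have h3 : q - p < a - b := by
    have : q ≤ ‖(starRingEnd ℂ) α₂ * P + α₂ * Q‖ + p := by
      calc q = ‖((starRingEnd ℂ) α₂ * P + α₂ * Q) - (starRingEnd ℂ) α₂ * P‖ := by
              rw [add_sub_cancel_left, norm_mul, hα₂, one_mul]
        _ ≤ ‖(starRingEnd ℂ) α₂ * P + α₂ * Q‖ + ‖(starRingEnd ℂ) α₂ * P‖ := by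
              simpa [sub_eq_add_neg, norm_neg] using
                norm_add_le ((starRingEnd ℂ) α₂ * P + α₂ * Q) (-((starRingEnd ℂ) α₂ * P))
        _ = ‖(starRingEnd ℂ) α₂ * P + α₂ * Q‖ + p := by
              rw [norm_mul, Complex.norm_conj, hα₂, one_mul]
    linarith
  have hpa : p < a := by linarith
  have hqa : q < a := by linarith
  have hp0 : 0 ≤ p := norm_nonneg P
  have hq0 : 0 ≤ q := norm_nonneg Q
  have hb0 : 0 ≤ b := norm_nonneg B
  have hbp : b ≤ p := by
    by_contra hc
    push_neg at hc
    have hb : 0 < b := lt_of_le_of_lt hp0 hc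
    nlinarith
  have hbq : b ≤ q := by
    by_contra hc
    push_neg at hc
    have hb : 0 < b := lt_of_le_of_lt hq0 hc
    nlinarith
  have hA : A ≠ 0 := by
    have : 0 < a := lt_of_le_of_lt hp0 hpa
    exact norm_pos_iff.mp this
  exact ⟨hpa, hbp, hqa, hbq, hA⟩
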